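/- Let N ≥ 1 and let c : Fin N → Fin N → ℝ satisfy c k l = c l k and c k l > 0 for all k, l. Let Ω := ({(k,l) : k ≤ l} → ℝ) × ({(k,l) : k < l} → ℝ), equipped with Lebesgue (product) measure, parametrizing Hermitian N×N matrices: for ω = (x,y) ∈ Ω set Q_{kl}(ω) := x_{(k,l)} + i·y_{(k,l)} if k < l, Q_{kk}(ω) := x_{(k,k)}, and Q_{kl}(ω) := x_{(l,k)} − i·y_{(l,k)} if k > l. Define β(ω) := Σ_{k<l} c k l·(x_{(k,l)}² + y_{(k,l)}²) + (1/2)·Σ_k c k k·x_{(k,k)}² (that is, β = (1/2)Σ_{k,l} c k l·((Re Q_{kl})² + (Im Q_{kl})²)). Then ω ↦ e^{−β(ω)} and ω ↦ Q_{kl}(ω)·Q_{mn}(ω)·e^{−β(ω)} are integrable on Ω, and for all k, l, m, n ∈ Fin N: ∫_Ω Q_{kl}(ω)·Q_{mn}(ω)·e^{−β(ω)} dω = (if k = n and l = m then (c k l)⁻¹ else 0) · ∫_Ω e^{−β(ω)} dω. -/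

import Mathlib

open MeasureTheory

/-- Index set for the independent real coordinates `Re Q_{kl}`, `k ≤ l`. -/
abbrev IdxLe (N : ℕ) := {p : Fin N × Fin N // p.1 ≤ p.2}

/-- Index set for the independent real coordinates `Im Q_{kl}`, `k < l`. -/
abbrev IdxLt (N : ℕ) := {p : Fin N × Fin N // p.1 < p.2}

/-- The parameter space `Ω` of Hermitian `N×N` matrices, with Lebesgue (product)
measure on the coordinates `Re Q_{kl}` (`k ≤ l`) and `Im Q_{kl}` (`k < l`). -/
abbrev OmegaSp (N : ℕ) := (IdxLe N → ℝ) × (IdxLt N → ℝ)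

/-- The matrix entry `Q_{kl}(ω)` of the Hermitian matrix parametrized by `ω`. -/
noncomputable def Qmat {N : ℕ} (ω : OmegaSp N) (k l : Fin N) : ℂ :=
  if h : k < l then (ω.1 ⟨(k, l), le_of_lt h⟩ : ℂ) + Complex.I * (ω.2 ⟨(k, l), h⟩ : ℂ)
  else if h' : l < k then (ω.1 ⟨(l, k), le_of_lt h'⟩ : ℂ) - Complex.I * (ω.2 ⟨(l, k), h'⟩ : ℂ)
  else ((ω.1 ⟨(k, l), not_lt.mp h'⟩ : ℝ) : ℂ)

/-- `β(ω) = Σ_{k<l} c k l·((Re Q_{kl})² + (Im Q_{kl})²) + ½·Σ_k c k k·(Re Q_{kk})²`,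
i.e. `β = ½ Σ_{k,l} c k l·((Re Q_{kl})² + (Im Q_{kl})²)`. -/
noncomputable def betaFun {N : ℕ} (c : Fin N → Fin N → ℝ) (ω : OmegaSp N) : ℝ :=
  (∑ q : IdxLt N, c q.1.1 q.1.2 * ((ω.1 ⟨q.1, le_of_lt q.2⟩) ^ 2 + (ω.2 q) ^ 2)) +
    (1 / 2) * ∑ k : Fin N, c k k * (ω.1 ⟨(k, k), le_refl k⟩) ^ 2


open Real
set_option linter.unusedSectionVars false

section OneDim
lemma odd_gauss {b : ℝ} : ∫ x : ℝ, x * exp (-b * x^2) = 0 := by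
  have h := integral_neg_eq_self (fun x : ℝ => x * exp (-b * x^2)) (volume : Measure ℝ)
  simp only [neg_sq, neg_mul] at h ⊢
  rw [integral_neg] at h
  linarith

lemma integrable_sq_gauss {b : ℝ} (hb : 0 < b) :
    Integrable (fun x : ℝ => x^2 * exp (-b * x^2)) := by
  have := integrable_rpow_mul_exp_neg_mul_sq hb (s := 2) (by norm_num)
  simpa [Real.rpow_natCast] using this

lemma deriv_pt {b : ℝ} (x : ℝ) : HasDerivAt (fun t : ℝ => t * exp (-b * t^2))
    (exp (-b * x^2) - 2*b*(x^2 * exp (-b*x^2))) x := by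
  have h2 : HasDerivAt (fun t : ℝ => -b * t^2) (-b * (2*x)) x := by
    simpa using ((hasDerivAt_pow 2 x).const_mul (-b))
  have h4 : HasDerivAt (fun t : ℝ => t * exp (-b * t^2)) _ x := (hasDerivAt_id x).mul h2.exp
  convert h4 using 1
  simp only [id]
  ring

lemma tendsto_top {b : ℝ} (hb : 0 < b) :
    Filter.Tendsto (fun t : ℝ => t * exp (-b * t^2)) Filter.atTop (nhds 0) := by
  have h := rpow_mul_exp_neg_mul_sq_isLittleO_exp_neg hb 1
  simp only [Real.rpow_one] at h
  refine h.trans_tendsto ?_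
  have h1 : Filter.Tendsto (fun x : ℝ => -(1/2) * x) Filter.atTop Filter.atBot :=
    (Filter.tendsto_const_mul_atBot_of_neg (by norm_num)).2 Filter.tendsto_id
  simpa [Function.comp_def, neg_mul] using Real.tendsto_exp_atBot.comp h1

lemma tendsto_bot {b : ℝ} (hb : 0 < b) :
    Filter.Tendsto (fun t : ℝ => t * exp (-b * t^2)) Filter.atBot (nhds 0) := by
  have h := (tendsto_top hb).comp Filter.tendsto_neg_atBot_atTop
  simpa [Function.comp_def, neg_sq, neg_mul] using h.neg

lemma sq_gauss_int {b : ℝ} (hb : 0 < b) :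
    ∫ x : ℝ, x^2 * exp (-b * x^2) = (2*b)⁻¹ * ∫ x : ℝ, exp (-b * x^2) := by
  have hint : Integrable (fun x : ℝ => exp (-b * x^2) - 2*b*(x^2 * exp (-b*x^2))) :=
    (integrable_exp_neg_mul_sq hb).sub ((integrable_sq_gauss hb).const_mul _)
  have h1 : ∫ x in Set.Ioi (0:ℝ), (exp (-b * x^2) - 2*b*(x^2 * exp (-b*x^2)))
      = 0 - (0 * exp (-b * 0^2)) :=
    MeasureTheory.integral_Ioi_of_hasDerivAt_of_tendsto'
      (fun x _ => deriv_pt x) hint.integrableOn (tendsto_top hb)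
  have h2 : ∫ x in Set.Iic (0:ℝ), (exp (-b * x^2) - 2*b*(x^2 * exp (-b*x^2)))
      = (0 * exp (-b * 0^2)) - 0 :=
    MeasureTheory.integral_Iic_of_hasDerivAt_of_tendsto'
      (fun x _ => deriv_pt x) hint.integrableOn (tendsto_bot hb)
  have h3 := intervalIntegral.integral_Iic_add_Ioi (b := (0:ℝ)) hint.integrableOn hint.integrableOn
  rw [h1, h2] at h3
  simp only [zero_mul, sub_zero, zero_sub, neg_zero, add_zero, zero_add] at h3
  rw [integral_sub (integrable_exp_neg_mul_sq hb) ((integrable_sq_gauss hb).const_mul _),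
    MeasureTheory.integral_const_mul] at h3
  have hb2 : (2*b) ≠ 0 := by positivity
  field_simp at h3 ⊢
  linarith
end OneDim

section PiDim
variable {ι : Type*} [Fintype ι] [DecidableEq ι]

noncomputable def gaussE (a : ι → ℝ) (x : ι → ℝ) : ℝ := Real.exp (-∑ i, a i * (x i)^2)

lemma gaussE_eq_prod (a : ι → ℝ) (x : ι → ℝ) :
    gaussE a x = ∏ i, exp (-a i * (x i)^2) := by
  rw [gaussE, ← Finset.sum_neg_distrib, Real.exp_sum]
  exact Finset.prod_congr rfl fun i _ => by rw [neg_mul]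

lemma pi_aux (a : ι → ℝ) (φ : ι → ℝ → ℝ)
    (hφ : ∀ i, Integrable fun t : ℝ => φ i t * exp (-a i * t^2)) :
    Integrable (fun x : ι → ℝ => (∏ i, φ i (x i)) * gaussE a x) ∧
    ∫ x : ι → ℝ, (∏ i, φ i (x i)) * gaussE a x
      = ∏ i, ∫ t : ℝ, φ i t * exp (-a i * t^2) := by
  have hfun : (fun x : ι → ℝ => (∏ i, φ i (x i)) * gaussE a x)
      = fun x : ι → ℝ => ∏ i, (φ i (x i) * exp (-a i * (x i)^2)) := by
    funext x
    rw [gaussE_eq_prod, ← Finset.prod_mul_distrib]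
  constructor
  · rw [hfun]
    exact MeasureTheory.Integrable.fintype_prod (f := fun i t => φ i t * exp (-a i * t^2)) hφ
  · rw [hfun]
    exact MeasureTheory.integral_fintype_prod_eq_prod (fun i t => φ i t * exp (-a i * t^2))

lemma pi_int (a : ι → ℝ) (ha : ∀ i, 0 < a i) : Integrable (gaussE a) := by
  have := (pi_aux a (fun _ _ => (1:ℝ)) (fun i => by
    simpa using integrable_exp_neg_mul_sq (ha i))).1
  simpa using this

lemma pi_int_eq_prod (a : ι → ℝ) (ha : ∀ i, 0 < a i) :
    ∫ x : ι → ℝ, gaussE a x = ∏ i, ∫ t : ℝ, exp (-a i * t^2) := by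
  have := (pi_aux a (fun _ _ => (1:ℝ)) (fun i => by
    simpa using integrable_exp_neg_mul_sq (ha i))).2
  simpa using this

lemma pi_lin (a : ι → ℝ) (ha : ∀ i, 0 < a i) (p : ι) :
    Integrable (fun x : ι → ℝ => x p * gaussE a x) ∧
    ∫ x : ι → ℝ, x p * gaussE a x = 0 := by
  have hφ : ∀ i, Integrable fun t : ℝ =>
      (if i = p then t else 1) * exp (-a i * t^2) := by
    intro i
    by_cases h : i = p
    · simpa [h] using integrable_mul_exp_neg_mul_sq (ha i)
    · simpa [h] using integrable_exp_neg_mul_sq (ha i)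
  have key := pi_aux a (fun i t => if i = p then t else 1) hφ
  have hprod : ∀ x : ι → ℝ, (∏ i, if i = p then x i else 1) = x p := by
    intro x
    rw [Finset.prod_ite_eq' Finset.univ p (fun i => x i)]
    simp
  constructor
  · have := key.1
    simpa only [hprod] using this
  · have := key.2
    simp only [hprod] at this
    rw [this]
    refine Finset.prod_eq_zero (Finset.mem_univ p) ?_
    simp only [if_pos rfl]
    exact odd_gauss

lemma pi_quad (a : ι → ℝ) (ha : ∀ i, 0 < a i) (p q : ι) :
    Integrable (fun x : ι → ℝ => x p * x q * gaussE a x) ∧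
    ∫ x : ι → ℝ, x p * x q * gaussE a x
      = (if p = q then (2 * a p)⁻¹ else 0) * ∫ x : ι → ℝ, gaussE a x := by
  set φ : ι → ℝ → ℝ := fun i t => (if i = p then t else 1) * (if i = q then t else 1) with hφdef
  have hφ : ∀ i, Integrable fun t : ℝ => φ i t * exp (-a i * t^2) := by
    intro i
    by_cases h1 : i = p
    · subst h1
      by_cases h2 : i = q
      · subst h2
        simpa [hφdef, sq, mul_assoc] using integrable_sq_gauss (ha i)
      · simpa [hφdef, h2] using integrable_mul_exp_neg_mul_sq (ha i)
    · by_cases h2 : i = q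
      · subst h2
        simpa [hφdef, h1] using integrable_mul_exp_neg_mul_sq (ha i)
      · simpa [hφdef, h1, h2] using integrable_exp_neg_mul_sq (ha i)
  have key := pi_aux a φ hφ
  have hprod : ∀ x : ι → ℝ, (∏ i, φ i (x i)) = x p * x q := by
    intro x
    simp only [hφdef]
    rw [Finset.prod_mul_distrib, Finset.prod_ite_eq' Finset.univ p (fun i => x i),
      Finset.prod_ite_eq' Finset.univ q (fun i => x i)]
    simp
  refine ⟨by simpa only [hprod] using key.1, ?_⟩
  have hint := key.2
  simp only [hprod] at hint
  rw [hint, pi_int_eq_prod a ha]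
  by_cases hpq : p = q
  · subst hpq
    rw [if_pos rfl]
    rw [← Finset.mul_prod_erase Finset.univ _ (Finset.mem_univ p),
      ← Finset.mul_prod_erase Finset.univ (fun i => ∫ t : ℝ, exp (-a i * t^2)) (Finset.mem_univ p)]
    have h1 : ∫ t : ℝ, φ p t * exp (-a p * t^2) = (2 * a p)⁻¹ * ∫ t : ℝ, exp (-a p * t^2) := by
      have : (fun t : ℝ => φ p t * exp (-a p * t^2)) = fun t : ℝ => t^2 * exp (-a p * t^2) := by
        funext t; simp [hφdef, sq, mul_assoc]
      rw [this, sq_gauss_int (ha p)]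
    rw [h1]
    have h2 : ∏ i ∈ Finset.univ.erase p, (∫ t : ℝ, φ i t * exp (-a i * t^2))
        = ∏ i ∈ Finset.univ.erase p, ∫ t : ℝ, exp (-a i * t^2) := by
      refine Finset.prod_congr rfl fun i hi => ?_
      have hip : i ≠ p := (Finset.mem_erase.1 hi).1
      simp [hφdef, hip]
    rw [h2]; ring
  · rw [if_neg hpq, zero_mul]
    refine Finset.prod_eq_zero (Finset.mem_univ p) ?_
    have : (fun t : ℝ => φ p t * exp (-a p * t^2)) = fun t : ℝ => t * exp (-a p * t^2) := by
      funext t; simp [hφdef, hpq]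
    rw [this, odd_gauss]
end PiDim

noncomputable def aLe {N : ℕ} (c : Fin N → Fin N → ℝ) (p : IdxLe N) : ℝ :=
  if p.1.1 = p.1.2 then c p.1.1 p.1.2 / 2 else c p.1.1 p.1.2

noncomputable def aLt {N : ℕ} (c : Fin N → Fin N → ℝ) (q : IdxLt N) : ℝ := c q.1.1 q.1.2

def eSplit (N : ℕ) : (IdxLt N ⊕ Fin N) ≃ IdxLe N where
  toFun := Sum.elim (fun q => ⟨q.1, le_of_lt q.2⟩) (fun k => ⟨(k, k), le_refl k⟩)
  invFun p := if h : p.1.1 < p.1.2 then Sum.inl ⟨p.1, h⟩ else Sum.inr p.1.1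
  left_inv := by
    rintro (⟨⟨k, l⟩, h⟩ | k)
    · simp [h]
    · simp
  right_inv := by
    rintro ⟨⟨k, l⟩, h⟩
    rcases lt_or_eq_of_le h with h' | h'
    · simp [h']
    · have h'' : k = l := h'
      subst h''
      simp

lemma beta_eq {N : ℕ} (c : Fin N → Fin N → ℝ) (ω : OmegaSp N) :
    betaFun c ω = (∑ p : IdxLe N, aLe c p * (ω.1 p)^2) + ∑ q : IdxLt N, aLt c q * (ω.2 q)^2 := by
  have hsplit : ∑ p : IdxLe N, aLe c p * (ω.1 p)^2
      = (∑ q : IdxLt N, aLe c ⟨q.1, le_of_lt q.2⟩ * (ω.1 ⟨q.1, le_of_lt q.2⟩)^2)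
        + ∑ k : Fin N, aLe c ⟨(k, k), le_refl k⟩ * (ω.1 ⟨(k, k), le_refl k⟩)^2 := by
    rw [← Equiv.sum_comp (eSplit N) (fun p : IdxLe N => aLe c p * (ω.1 p)^2),
      Fintype.sum_sum_type]
    rfl
  have h1 : ∀ q : IdxLt N, aLe c ⟨q.1, le_of_lt q.2⟩ = c q.1.1 q.1.2 :=
    fun q => if_neg (ne_of_lt q.2)
  have h2 : ∀ k : Fin N, aLe c (⟨(k, k), le_refl k⟩ : IdxLe N) = c k k / 2 :=
    fun k => if_pos rfl
  simp only [h1, h2] at hsplit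
  have h4 : ∑ q : IdxLt N, c q.1.1 q.1.2 * ((ω.1 ⟨q.1, le_of_lt q.2⟩)^2 + (ω.2 q)^2)
      = ∑ q : IdxLt N, c q.1.1 q.1.2 * (ω.1 ⟨q.1, le_of_lt q.2⟩)^2
        + ∑ q : IdxLt N, aLt c q * (ω.2 q)^2 := by
    rw [← Finset.sum_add_distrib]
    exact Finset.sum_congr rfl fun q _ => by rw [aLt]; ring
  have h3 : (1/2 : ℝ) * ∑ k : Fin N, c k k * (ω.1 ⟨(k, k), le_refl k⟩)^2
      = ∑ k : Fin N, c k k / 2 * (ω.1 ⟨(k, k), le_refl k⟩)^2 := by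
    rw [Finset.mul_sum]
    exact Finset.sum_congr rfl fun k _ => by ring
  rw [betaFun, hsplit, h4, h3]
  ring

def xi {N : ℕ} (k l : Fin N) : IdxLe N :=
  if h : k ≤ l then ⟨(k, l), h⟩ else ⟨(l, k), le_of_not_ge h⟩

def YvB {N : ℕ} (y : IdxLt N → ℝ) (k l : Fin N) : ℝ :=
  if h : k < l then y ⟨(k, l), h⟩ else if h' : l < k then -(y ⟨(l, k), h'⟩) else 0

lemma Qdecomp {N : ℕ} (ω : OmegaSp N) (k l : Fin N) :
    Qmat ω k l = (ω.1 (xi k l) : ℂ) + Complex.I * (YvB ω.2 k l : ℂ) := by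
  rcases lt_trichotomy k l with h | h | h
  · rw [Qmat, dif_pos h, xi, dif_pos (le_of_lt h), YvB, dif_pos h]
  · subst h
    rw [Qmat, dif_neg (lt_irrefl k), dif_neg (lt_irrefl k), xi, dif_pos (le_refl k), YvB,
      dif_neg (lt_irrefl k), dif_neg (lt_irrefl k)]
    simp
  · rw [Qmat, dif_neg (not_lt.mpr (le_of_lt h)), dif_pos h, xi,
      dif_neg (not_le.mpr h), YvB, dif_neg (not_lt.mpr (le_of_lt h)), dif_pos h]
    push_cast
    ring

lemma xi_eq_iff {N : ℕ} (k l m n : Fin N) :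
    xi k l = xi m n ↔ (k = m ∧ l = n) ∨ (k = n ∧ l = m) := by
  rw [xi, xi]
  split_ifs with h1 h2 h2 <;>
    simp only [Subtype.mk.injEq, Prod.mk.injEq, Fin.ext_iff] <;>
    rw [Fin.le_def] at h1 <;>
    (rw [Fin.le_def] at h2; omega)

lemma aLe_xi_diag {N : ℕ} (c : Fin N → Fin N → ℝ) (k : Fin N) :
    aLe c (xi k k) = c k k / 2 := by
  rw [xi, dif_pos (le_refl k), aLe, if_pos rfl]

lemma aLe_xi_off {N : ℕ} (c : Fin N → Fin N → ℝ) (hsymm : ∀ k l, c k l = c l k)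
    {k l : Fin N} (h : k ≠ l) : aLe c (xi k l) = c k l := by
  rw [xi]
  by_cases h1 : k ≤ l
  · rw [dif_pos h1, aLe, if_neg h]
  · rw [dif_neg h1, aLe, if_neg (Ne.symm h)]
    exact hsymm l k

lemma haA {N : ℕ} (c : Fin N → Fin N → ℝ) (hpos : ∀ k l, 0 < c k l) (p : IdxLe N) :
    0 < aLe c p := by
  rw [aLe]
  split_ifs
  · linarith [hpos p.1.1 p.1.2]
  · exact hpos _ _

lemma intA {N : ℕ} (c : Fin N → Fin N → ℝ) (hpos : ∀ k l, 0 < c k l) (k l m n : Fin N) :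
    Integrable (fun x : IdxLe N → ℝ => x (xi k l) * x (xi m n) * gaussE (aLe c) x) ∧
    ∫ x : IdxLe N → ℝ, x (xi k l) * x (xi m n) * gaussE (aLe c) x
      = (if (k = m ∧ l = n) ∨ (k = n ∧ l = m) then (2 * aLe c (xi k l))⁻¹ else 0)
          * ∫ x : IdxLe N → ℝ, gaussE (aLe c) x := by
  have key := pi_quad (aLe c) (haA c hpos) (xi k l) (xi m n)
  refine ⟨key.1, ?_⟩
  rw [key.2]
  simp only [xi_eq_iff]

lemma linB {N : ℕ} (c : Fin N → Fin N → ℝ) (hpos : ∀ k l, 0 < c k l) (k l : Fin N) :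
    Integrable (fun y : IdxLt N → ℝ => YvB y k l * gaussE (aLt c) y) ∧
    ∫ y : IdxLt N → ℝ, YvB y k l * gaussE (aLt c) y = 0 := by
  have haB : ∀ q : IdxLt N, 0 < aLt c q := fun q => hpos _ _
  rcases lt_trichotomy k l with h | h | h
  · have hfun : (fun y : IdxLt N → ℝ => YvB y k l * gaussE (aLt c) y)
        = fun y => y ⟨(k, l), h⟩ * gaussE (aLt c) y := by
      funext y; rw [YvB, dif_pos h]
    rw [hfun]
    exact pi_lin (aLt c) haB _
  · have hfun : (fun y : IdxLt N → ℝ => YvB y k l * gaussE (aLt c) y)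
        = fun _ => (0:ℝ) := by
      subst h
      funext y; rw [YvB, dif_neg (lt_irrefl k), dif_neg (lt_irrefl k), zero_mul]
    rw [hfun]
    exact ⟨integrable_zero _ _ _, integral_zero _ _⟩
  · have hfun : (fun y : IdxLt N → ℝ => YvB y k l * gaussE (aLt c) y)
        = fun y => -(y ⟨(l, k), h⟩ * gaussE (aLt c) y) := by
      funext y; rw [YvB, dif_neg (not_lt.mpr (le_of_lt h)), dif_pos h]; ring
    rw [hfun]
    have key := pi_lin (aLt c) haB (⟨(l, k), h⟩ : IdxLt N)
    exact ⟨key.1.neg, by rw [integral_neg, key.2, neg_zero]⟩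

lemma intB {N : ℕ} (c : Fin N → Fin N → ℝ) (hsymm : ∀ k l, c k l = c l k)
    (hpos : ∀ k l, 0 < c k l) (k l m n : Fin N) :
    Integrable (fun y : IdxLt N → ℝ => YvB y k l * YvB y m n * gaussE (aLt c) y) ∧
    ∫ y : IdxLt N → ℝ, YvB y k l * YvB y m n * gaussE (aLt c) y
      = (((if k = m ∧ l = n then (1:ℝ) else 0) - if k = n ∧ l = m then 1 else 0)
          * if k = l then 0 else (2 * c k l)⁻¹) * ∫ y : IdxLt N → ℝ, gaussE (aLt c) y := by
  have haB : ∀ q : IdxLt N, 0 < aLt c q := fun q => hpos _ _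
  by_cases hkl : k = l
  · subst hkl
    have hfun : (fun y : IdxLt N → ℝ => YvB y k k * YvB y m n * gaussE (aLt c) y)
        = fun _ => (0:ℝ) := by
      funext y; rw [YvB, dif_neg (lt_irrefl k), dif_neg (lt_irrefl k)]; ring
    rw [hfun, if_pos rfl]
    exact ⟨integrable_zero _ _ _, by rw [integral_zero]; ring⟩
  by_cases hmn : m = n
  · subst hmn
    have hfun : (fun y : IdxLt N → ℝ => YvB y k l * YvB y m m * gaussE (aLt c) y)
        = fun _ => (0:ℝ) := by
      funext y
      rw [show YvB y m m = 0 from by rw [YvB, dif_neg (lt_irrefl m), dif_neg (lt_irrefl m)]]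
      ring
    rw [hfun]
    refine ⟨integrable_zero _ _ _, ?_⟩
    rw [integral_zero, sub_self, zero_mul, zero_mul]
  rcases lt_trichotomy k l with hkl' | hkl' | hkl'
  · rcases lt_trichotomy m n with hmn' | hmn' | hmn'
    · -- k < l, m < n
      have hq : (⟨(k, l), hkl'⟩ : IdxLt N) = ⟨(m, n), hmn'⟩ ↔ (k = m ∧ l = n) := by
        simp [Subtype.ext_iff, Prod.ext_iff]
      have h2 : ¬(k = n ∧ l = m) := by
        rintro ⟨rfl, rfl⟩; exact lt_asymm hkl' hmn'
      have key := pi_quad (aLt c) haB (⟨(k, l), hkl'⟩ : IdxLt N) ⟨(m, n), hmn'⟩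
      have hfun : (fun y : IdxLt N → ℝ => YvB y k l * YvB y m n * gaussE (aLt c) y)
          = fun y => y ⟨(k, l), hkl'⟩ * y ⟨(m, n), hmn'⟩ * gaussE (aLt c) y := by
        funext y; rw [YvB, dif_pos hkl', YvB, dif_pos hmn']
      refine ⟨hfun ▸ key.1, ?_⟩
      rw [hfun, key.2]
      congr 1
      rw [if_neg h2, if_neg hkl]
      by_cases hc : k = m ∧ l = n
      · rw [if_pos (hq.mpr hc), if_pos hc, show aLt c ⟨(k, l), hkl'⟩ = c k l from rfl]
        ring
      · rw [if_neg (fun h => hc (hq.mp h)), if_neg hc]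
        ring
    · exact absurd hmn' hmn
    · -- k < l, n < m
      have hq : (⟨(k, l), hkl'⟩ : IdxLt N) = ⟨(n, m), hmn'⟩ ↔ (k = n ∧ l = m) := by
        simp [Subtype.ext_iff, Prod.ext_iff]
      have h1 : ¬(k = m ∧ l = n) := by
        rintro ⟨rfl, rfl⟩; exact lt_asymm hkl' hmn'
      have key := pi_quad (aLt c) haB (⟨(k, l), hkl'⟩ : IdxLt N) ⟨(n, m), hmn'⟩
      have hfun : (fun y : IdxLt N → ℝ => YvB y k l * YvB y m n * gaussE (aLt c) y)
          = fun y => -(y ⟨(k, l), hkl'⟩ * y ⟨(n, m), hmn'⟩ * gaussE (aLt c) y) := by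
        funext y
        rw [YvB, dif_pos hkl', YvB, dif_neg (not_lt.mpr (le_of_lt hmn')), dif_pos hmn']
        ring
      refine ⟨hfun ▸ (key.1.neg), ?_⟩
      rw [hfun, integral_neg, key.2]
      rw [if_neg h1, if_neg hkl]
      by_cases hc : k = n ∧ l = m
      · rw [if_pos (hq.mpr hc), if_pos hc, show aLt c ⟨(k, l), hkl'⟩ = c k l from rfl]
        ring
      · rw [if_neg (fun h => hc (hq.mp h)), if_neg hc]
        ring
  · exact absurd hkl' hkl
  · rcases lt_trichotomy m n with hmn' | hmn' | hmn'
    · -- l < k, m < n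
      have hq : (⟨(l, k), hkl'⟩ : IdxLt N) = ⟨(m, n), hmn'⟩ ↔ (k = n ∧ l = m) := by
        simp [Subtype.ext_iff, Prod.ext_iff, and_comm]
      have h1 : ¬(k = m ∧ l = n) := by
        rintro ⟨rfl, rfl⟩; exact lt_asymm hkl' hmn'
      have key := pi_quad (aLt c) haB (⟨(l, k), hkl'⟩ : IdxLt N) ⟨(m, n), hmn'⟩
      have hfun : (fun y : IdxLt N → ℝ => YvB y k l * YvB y m n * gaussE (aLt c) y)
          = fun y => -(y ⟨(l, k), hkl'⟩ * y ⟨(m, n), hmn'⟩ * gaussE (aLt c) y) := by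
        funext y
        rw [YvB, dif_neg (not_lt.mpr (le_of_lt hkl')), dif_pos hkl', YvB, dif_pos hmn']
        ring
      refine ⟨hfun ▸ (key.1.neg), ?_⟩
      rw [hfun, integral_neg, key.2]
      rw [if_neg h1, if_neg hkl]
      by_cases hc : k = n ∧ l = m
      · rw [if_pos (hq.mpr hc), if_pos hc,
          show aLt c ⟨(l, k), hkl'⟩ = c l k from rfl, hsymm l k]
        ring
      · rw [if_neg (fun h => hc (hq.mp h)), if_neg hc]
        ring
    · exact absurd hmn' hmn
    · -- l < k, n < m
      have hq : (⟨(l, k), hkl'⟩ : IdxLt N) = ⟨(n, m), hmn'⟩ ↔ (k = m ∧ l = n) := by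
        simp [Subtype.ext_iff, Prod.ext_iff, and_comm]
      have h2 : ¬(k = n ∧ l = m) := by
        rintro ⟨rfl, rfl⟩; exact lt_asymm hkl' hmn'
      have key := pi_quad (aLt c) haB (⟨(l, k), hkl'⟩ : IdxLt N) ⟨(n, m), hmn'⟩
      have hfun : (fun y : IdxLt N → ℝ => YvB y k l * YvB y m n * gaussE (aLt c) y)
          = fun y => y ⟨(l, k), hkl'⟩ * y ⟨(n, m), hmn'⟩ * gaussE (aLt c) y := by
        funext y
        rw [YvB, dif_neg (not_lt.mpr (le_of_lt hkl')), dif_pos hkl',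
          YvB, dif_neg (not_lt.mpr (le_of_lt hmn')), dif_pos hmn']
        ring
      refine ⟨hfun ▸ key.1, ?_⟩
      rw [hfun, key.2]
      congr 1
      rw [if_neg h2, if_neg hkl]
      by_cases hc : k = m ∧ l = n
      · rw [if_pos (hq.mpr hc), if_pos hc,
          show aLt c ⟨(l, k), hkl'⟩ = c l k from rfl, hsymm l k]
        ring
      · rw [if_neg (fun h => hc (hq.mp h)), if_neg hc]
        ring

lemma coeffEq {N : ℕ} (c : Fin N → Fin N → ℝ) (hsymm : ∀ k l, c k l = c l k)
    (hpos : ∀ k l, 0 < c k l) (k l m n : Fin N) :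
    (if (k = m ∧ l = n) ∨ (k = n ∧ l = m) then (2 * aLe c (xi k l))⁻¹ else 0)
      - ((if k = m ∧ l = n then (1:ℝ) else 0) - if k = n ∧ l = m then 1 else 0)
          * (if k = l then 0 else (2 * c k l)⁻¹)
    = if k = n ∧ l = m then (c k l)⁻¹ else 0 := by
  by_cases h1 : k = m ∧ l = n <;> by_cases h2 : k = n ∧ l = m
  · have hkl : k = l := by
      obtain ⟨hm, hn⟩ := h1; obtain ⟨hn', hm'⟩ := h2
      rw [hm, ← hm']
    subst hkl
    rw [if_pos (Or.inl h1), if_pos h1, if_pos h2, if_pos rfl, if_pos h2, aLe_xi_diag,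
      show (2:ℝ) * (c k k / 2) = c k k from by ring]
    ring
  · have hkl : k ≠ l := by
      rintro rfl
      exact h2 ⟨h1.2, h1.1⟩
    rw [if_pos (Or.inl h1), if_pos h1, if_neg h2, if_neg hkl, if_neg h2,
      aLe_xi_off c hsymm hkl]
    ring
  · have hkl : k ≠ l := by
      rintro rfl
      exact h1 ⟨h2.2, h2.1⟩
    rw [if_pos (Or.inr h2), if_neg h1, if_pos h2, if_neg hkl, if_pos h2,
      aLe_xi_off c hsymm hkl, mul_inv]
    ring
  · rw [if_neg (by tauto), if_neg h1, if_neg h2, if_neg h2]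
    ring


/-- Gauge-field propagator for random Hermitian matrices:  if `c` is symmetric and
positive, then `e^{−β}` and `Q_{kl}Q_{mn}e^{−β}` are integrable on `Ω`, and
`∫ Q_{kl}Q_{mn}e^{−β} = δ_{kn}δ_{lm}·(c k l)⁻¹·∫ e^{−β}`. -/
theorem stmt18 (N : ℕ) (hN : 1 ≤ N) (c : Fin N → Fin N → ℝ)
    (hsymm : ∀ k l, c k l = c l k) (hpos : ∀ k l, 0 < c k l) :
    (Integrable fun ω : OmegaSp N => Real.exp (-betaFun c ω)) ∧
    ∀ k l m n : Fin N,
      (Integrable fun ω : OmegaSp N =>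
        Qmat ω k l * Qmat ω m n * (Real.exp (-betaFun c ω) : ℂ)) ∧
      ∫ ω : OmegaSp N, Qmat ω k l * Qmat ω m n * (Real.exp (-betaFun c ω) : ℂ) =
        (if k = n ∧ l = m then ((c k l : ℝ) : ℂ)⁻¹ else 0) *
          ∫ ω : OmegaSp N, (Real.exp (-betaFun c ω) : ℂ) := by
  have haA' : ∀ p : IdxLe N, 0 < aLe c p := haA c hpos
  have haB' : ∀ q : IdxLt N, 0 < aLt c q := fun q => hpos _ _
  have hexp : (fun ω : OmegaSp N => Real.exp (-betaFun c ω))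
      = fun ω : OmegaSp N => gaussE (aLe c) ω.1 * gaussE (aLt c) ω.2 := by
    funext ω
    rw [beta_eq c ω, neg_add, Real.exp_add]
    rfl
  have hIA : Integrable (gaussE (aLe c)) := pi_int _ haA'
  have hIB : Integrable (gaussE (aLt c)) := pi_int _ haB'
  have hvol : (volume : Measure (OmegaSp N))
      = (volume : Measure (IdxLe N → ℝ)).prod (volume : Measure (IdxLt N → ℝ)) :=
    MeasureTheory.Measure.volume_eq_prod _ _
  have hint0 : Integrable (fun ω : OmegaSp N => Real.exp (-betaFun c ω)) := by
    rw [hexp, hvol]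
    exact hIA.mul_prod hIB
  have hZ : ∫ ω : OmegaSp N, Real.exp (-betaFun c ω)
      = (∫ x : IdxLe N → ℝ, gaussE (aLe c) x) * ∫ y : IdxLt N → ℝ, gaussE (aLt c) y := by
    rw [hexp, hvol, MeasureTheory.integral_prod_mul]
  have hR : ∫ ω : OmegaSp N, (Real.exp (-betaFun c ω) : ℂ)
      = (((∫ x : IdxLe N → ℝ, gaussE (aLe c) x)
          * ∫ y : IdxLt N → ℝ, gaussE (aLt c) y : ℝ) : ℂ) :=
    (integral_ofReal (f := fun ω : OmegaSp N => Real.exp (-betaFun c ω))).trans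
      (by exact congrArg Complex.ofReal hZ)
  refine ⟨hint0, fun k l m n => ?_⟩
  have hA2 := intA c hpos k l m n
  have hB2 := intB c hsymm hpos k l m n
  have hA1a := pi_lin (aLe c) haA' (xi k l)
  have hA1b := pi_lin (aLe c) haA' (xi m n)
  have hB1a := linB c hpos k l
  have hB1b := linB c hpos m n
  have hfun : (fun ω : OmegaSp N => Qmat ω k l * Qmat ω m n * (Real.exp (-betaFun c ω) : ℂ))
      = fun ω : OmegaSp N =>
        (((ω.1 (xi k l) * ω.1 (xi m n) * gaussE (aLe c) ω.1 : ℝ) : ℂ)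
            * ((gaussE (aLt c) ω.2 : ℝ) : ℂ)
          - ((gaussE (aLe c) ω.1 : ℝ) : ℂ)
            * ((YvB ω.2 k l * YvB ω.2 m n * gaussE (aLt c) ω.2 : ℝ) : ℂ))
        + (Complex.I * (((ω.1 (xi k l) * gaussE (aLe c) ω.1 : ℝ) : ℂ)
              * ((YvB ω.2 m n * gaussE (aLt c) ω.2 : ℝ) : ℂ))
          + Complex.I * (((ω.1 (xi m n) * gaussE (aLe c) ω.1 : ℝ) : ℂ)
              * ((YvB ω.2 k l * gaussE (aLt c) ω.2 : ℝ) : ℂ))) := by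
    funext ω
    rw [Qdecomp, Qdecomp, congrFun hexp ω]
    push_cast
    linear_combination ((YvB ω.2 k l : ℝ) : ℂ) * ((YvB ω.2 m n : ℝ) : ℂ)
      * ((gaussE (aLe c) ω.1 : ℝ) : ℂ) * ((gaussE (aLt c) ω.2 : ℝ) : ℂ) * Complex.I_sq
  have i1 : Integrable (fun ω : (IdxLe N → ℝ) × (IdxLt N → ℝ) =>
      ((ω.1 (xi k l) * ω.1 (xi m n) * gaussE (aLe c) ω.1 : ℝ) : ℂ)
        * ((gaussE (aLt c) ω.2 : ℝ) : ℂ)) (volume.prod volume) :=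
    (hA2.1.ofReal (𝕜 := ℂ)).mul_prod (hIB.ofReal (𝕜 := ℂ))
  have i2 : Integrable (fun ω : (IdxLe N → ℝ) × (IdxLt N → ℝ) =>
      ((gaussE (aLe c) ω.1 : ℝ) : ℂ)
        * ((YvB ω.2 k l * YvB ω.2 m n * gaussE (aLt c) ω.2 : ℝ) : ℂ)) (volume.prod volume) :=
    (hIA.ofReal (𝕜 := ℂ)).mul_prod (hB2.1.ofReal (𝕜 := ℂ))
  have i3 : Integrable (fun ω : (IdxLe N → ℝ) × (IdxLt N → ℝ) =>
      ((ω.1 (xi k l) * gaussE (aLe c) ω.1 : ℝ) : ℂ)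
        * ((YvB ω.2 m n * gaussE (aLt c) ω.2 : ℝ) : ℂ)) (volume.prod volume) :=
    (hA1a.1.ofReal (𝕜 := ℂ)).mul_prod (hB1b.1.ofReal (𝕜 := ℂ))
  have i4 : Integrable (fun ω : (IdxLe N → ℝ) × (IdxLt N → ℝ) =>
      ((ω.1 (xi m n) * gaussE (aLe c) ω.1 : ℝ) : ℂ)
        * ((YvB ω.2 k l * gaussE (aLt c) ω.2 : ℝ) : ℂ)) (volume.prod volume) :=
    (hA1b.1.ofReal (𝕜 := ℂ)).mul_prod (hB1a.1.ofReal (𝕜 := ℂ))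
  have i12 : Integrable (fun ω : (IdxLe N → ℝ) × (IdxLt N → ℝ) =>
      ((ω.1 (xi k l) * ω.1 (xi m n) * gaussE (aLe c) ω.1 : ℝ) : ℂ)
          * ((gaussE (aLt c) ω.2 : ℝ) : ℂ)
        - ((gaussE (aLe c) ω.1 : ℝ) : ℂ)
          * ((YvB ω.2 k l * YvB ω.2 m n * gaussE (aLt c) ω.2 : ℝ) : ℂ))
      (volume.prod volume) := i1.sub i2
  have i3' : Integrable (fun ω : (IdxLe N → ℝ) × (IdxLt N → ℝ) =>
      Complex.I * (((ω.1 (xi k l) * gaussE (aLe c) ω.1 : ℝ) : ℂ)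
        * ((YvB ω.2 m n * gaussE (aLt c) ω.2 : ℝ) : ℂ))) (volume.prod volume) :=
    i3.const_mul Complex.I
  have i4' : Integrable (fun ω : (IdxLe N → ℝ) × (IdxLt N → ℝ) =>
      Complex.I * (((ω.1 (xi m n) * gaussE (aLe c) ω.1 : ℝ) : ℂ)
        * ((YvB ω.2 k l * gaussE (aLt c) ω.2 : ℝ) : ℂ))) (volume.prod volume) :=
    i4.const_mul Complex.I
  have i34 : Integrable (fun ω : (IdxLe N → ℝ) × (IdxLt N → ℝ) =>
      Complex.I * (((ω.1 (xi k l) * gaussE (aLe c) ω.1 : ℝ) : ℂ)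
          * ((YvB ω.2 m n * gaussE (aLt c) ω.2 : ℝ) : ℂ))
        + Complex.I * (((ω.1 (xi m n) * gaussE (aLe c) ω.1 : ℝ) : ℂ)
          * ((YvB ω.2 k l * gaussE (aLt c) ω.2 : ℝ) : ℂ))) (volume.prod volume) :=
    i3'.add i4'
  constructor
  · rw [hfun, hvol]
    exact i12.add i34
  · rw [hR, hfun, hvol]
    simp only [MeasureTheory.integral_add i12 i34,
      MeasureTheory.integral_sub i1 i2,
      MeasureTheory.integral_add i3' i4',
      MeasureTheory.integral_const_mul]
    rw [MeasureTheory.integral_prod_mul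
        (f := fun x : IdxLe N → ℝ => ((x (xi k l) * x (xi m n) * gaussE (aLe c) x : ℝ) : ℂ))
        (g := fun y : IdxLt N → ℝ => ((gaussE (aLt c) y : ℝ) : ℂ)),
      MeasureTheory.integral_prod_mul
        (f := fun x : IdxLe N → ℝ => ((gaussE (aLe c) x : ℝ) : ℂ))
        (g := fun y : IdxLt N → ℝ => ((YvB y k l * YvB y m n * gaussE (aLt c) y : ℝ) : ℂ)),
      MeasureTheory.integral_prod_mul
        (f := fun x : IdxLe N → ℝ => ((x (xi k l) * gaussE (aLe c) x : ℝ) : ℂ))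
        (g := fun y : IdxLt N → ℝ => ((YvB y m n * gaussE (aLt c) y : ℝ) : ℂ)),
      MeasureTheory.integral_prod_mul
        (f := fun x : IdxLe N → ℝ => ((x (xi m n) * gaussE (aLe c) x : ℝ) : ℂ))
        (g := fun y : IdxLt N → ℝ => ((YvB y k l * gaussE (aLt c) y : ℝ) : ℂ))]
    have e1 : ∫ x : IdxLe N → ℝ, ((x (xi k l) * x (xi m n) * gaussE (aLe c) x : ℝ) : ℂ)
        = ((∫ x : IdxLe N → ℝ, x (xi k l) * x (xi m n) * gaussE (aLe c) x : ℝ) : ℂ) :=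
      integral_ofReal
    have e2 : ∫ y : IdxLt N → ℝ, ((gaussE (aLt c) y : ℝ) : ℂ)
        = ((∫ y : IdxLt N → ℝ, gaussE (aLt c) y : ℝ) : ℂ) := integral_ofReal
    have e3 : ∫ x : IdxLe N → ℝ, ((gaussE (aLe c) x : ℝ) : ℂ)
        = ((∫ x : IdxLe N → ℝ, gaussE (aLe c) x : ℝ) : ℂ) := integral_ofReal
    have e4 : ∫ y : IdxLt N → ℝ, ((YvB y k l * YvB y m n * gaussE (aLt c) y : ℝ) : ℂ)
        = ((∫ y : IdxLt N → ℝ, YvB y k l * YvB y m n * gaussE (aLt c) y : ℝ) : ℂ) :=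
      integral_ofReal
    have e5 : ∫ x : IdxLe N → ℝ, ((x (xi k l) * gaussE (aLe c) x : ℝ) : ℂ)
        = ((∫ x : IdxLe N → ℝ, x (xi k l) * gaussE (aLe c) x : ℝ) : ℂ) := integral_ofReal
    have e6 : ∫ y : IdxLt N → ℝ, ((YvB y m n * gaussE (aLt c) y : ℝ) : ℂ)
        = ((∫ y : IdxLt N → ℝ, YvB y m n * gaussE (aLt c) y : ℝ) : ℂ) := integral_ofReal
    have e7 : ∫ x : IdxLe N → ℝ, ((x (xi m n) * gaussE (aLe c) x : ℝ) : ℂ)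
        = ((∫ x : IdxLe N → ℝ, x (xi m n) * gaussE (aLe c) x : ℝ) : ℂ) := integral_ofReal
    have e8 : ∫ y : IdxLt N → ℝ, ((YvB y k l * gaussE (aLt c) y : ℝ) : ℂ)
        = ((∫ y : IdxLt N → ℝ, YvB y k l * gaussE (aLt c) y : ℝ) : ℂ) := integral_ofReal
    rw [e1, e2, e3, e4, e5, e6, e7, e8, hA2.2, hB2.2, hA1a.2, hB1a.2]
    have hcast : (if k = n ∧ l = m then ((c k l : ℝ) : ℂ)⁻¹ else 0)
        = (((if k = n ∧ l = m then (c k l)⁻¹ else 0 : ℝ)) : ℂ) := by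
      split_ifs <;> simp
    rw [hcast, ← coeffEq c hsymm hpos k l m n]
    push_cast
    ring
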